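/- In the ATL analogue of the chain models, the one-variable ATL formula A'_m = χ'_m ∧ ⟨⟨AG⟩⟩X ⟨⟨∅⟩⟩□¬p (with χ'₀ = ⟨⟨∅⟩⟩□p, χ'_{k+1} = p ∧ ⟨⟨AG⟩⟩X(¬p ∧ ⟨⟨AG⟩⟩X χ'_k)) is true at a state x of the concurrent game model M'_k if and only if k = m and x is the root r_k. -/

import Mathlib

/-- Concurrent game models over a set of agents Ag. -/
structure CGM (Ag S : Type) where
  Act : Type
  act : Ag → S → Set Act
  act_nonempty : ∀ a s, (act a s).Nonempty
  tr : S → (Ag → Act) → S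
  val : ℕ → S → Prop

/-- ATL formulas: ⟨⟨C⟩⟩X, ⟨⟨C⟩⟩□, ⟨⟨C⟩⟩U, with coalitions C ⊆ Ag. -/
inductive ATL (Ag : Type) : Type where
  | var : ℕ → ATL Ag
  | bot : ATL Ag
  | imp : ATL Ag → ATL Ag → ATL Ag
  | cnext : Set Ag → ATL Ag → ATL Ag
  | cbox : Set Ag → ATL Ag → ATL Ag
  | cuntil : Set Ag → ATL Ag → ATL Ag → ATL Ag

def ATL.neg {Ag : Type} (φ : ATL Ag) : ATL Ag := .imp φ .bot
def ATL.conj {Ag : Type} (φ ψ : ATL Ag) : ATL Ag := ATL.neg (.imp φ (ATL.neg ψ))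
def ATL.iffc {Ag : Type} (φ ψ : ATL Ag) : ATL Ag := ATL.conj (.imp φ ψ) (.imp ψ φ)

/-- An action profile available at s. -/
def profOK {Ag S : Type} (M : CGM Ag S) (s : S) (α : Ag → M.Act) : Prop :=
  ∀ a, α a ∈ M.act a s

/-- A (history-based) strategy: given the past history and the current state,
choose an action for each agent. -/
def Strat {Ag S : Type} (M : CGM Ag S) : Type := Ag → List S → S → M.Act

def stratOK {Ag S : Type} (M : CGM Ag S) (str : Strat M) : Prop :=
  ∀ a h s, str a h s ∈ M.act a s

/-- The history of π strictly before step j. -/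
def hist {S : Type} (π : ℕ → S) (j : ℕ) : List S := (List.range j).map π

/-- Π(s, str_C): paths starting at s resulting when the agents in C follow str. -/
def outPaths {Ag S : Type} (M : CGM Ag S) (C : Set Ag) (str : Strat M) (s : S) :
    Set (ℕ → S) :=
  { π | π 0 = s ∧ ∀ j, ∃ α, profOK M (π j) α ∧
      (∀ a ∈ C, α a = str a (hist π j) (π j)) ∧ π (j + 1) = M.tr (π j) α }

/-- ATL satisfaction in concurrent game models. -/
def asat {Ag S : Type} (M : CGM Ag S) : ATL Ag → S → Prop
  | .var n, s => M.val n s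
  | .bot, _ => False
  | .imp a b, s => asat M a s → asat M b s
  | .cnext C a, s => ∃ αC : Ag → M.Act, (∀ c ∈ C, αC c ∈ M.act c s) ∧
      ∀ α, profOK M s α → (∀ c ∈ C, α c = αC c) → asat M a (M.tr s α)
  | .cbox C a, s => ∃ str : Strat M, stratOK M str ∧
      ∀ π ∈ outPaths M C str s, ∀ i, asat M a (π i)
  | .cuntil C a b, s => ∃ str : Strat M, stratOK M str ∧
      ∀ π ∈ outPaths M C str s, ∃ i, asat M b (π i) ∧ ∀ j, j < i → asat M a (π j)

/-- Satisfiability in a concurrent game model over the fixed agent set Ag. -/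
def asatisfiable (Ag : Type) (φ : ATL Ag) : Prop :=
  ∃ (S : Type) (M : CGM Ag S) (s : S), asat M φ s

def aoccurs {Ag : Type} (q : ℕ) : ATL Ag → Prop
  | .var n => n = q
  | .bot => False
  | .imp a b => aoccurs q a ∨ aoccurs q b
  | .cnext _ a => aoccurs q a
  | .cbox _ a => aoccurs q a
  | .cuntil _ a b => aoccurs q a ∨ aoccurs q b

/-- p is true exactly at the root (state 0) and the even-indexed chain states
a_{2j} (state 2j+1); state 1 is b, state i+1 is a_i for 1 ≤ i ≤ 2k. -/
def chainVal (k : ℕ) (s : Fin (2 * k + 2)) : Prop :=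
  s.val = 0 ∨ (3 ≤ s.val ∧ s.val % 2 = 1)

/-- One-step successor function of the concurrent game chain model M'_k: the root
chooses between b and a₁ according to the boolean action c; each a_i (i < 2k)
chooses between its self-loop and a_{i+1}; b and a_{2k} only have self-loops. -/
def chainSucc (k : ℕ) (hk : 1 ≤ k) (s : Fin (2 * k + 2)) (c : Bool) : Fin (2 * k + 2) :=
  if s.val = 0 then (if c then ⟨1, by omega⟩ else ⟨2, by omega⟩)
  else if h : 2 ≤ s.val ∧ s.val ≤ 2 * k then (if c then s else ⟨s.val + 1, by omega⟩)
  else s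

/-- The concurrent game version M'_k of the chain model M_k: every agent has all
(boolean) actions available everywhere, and the transition function realizes the
edges of M_k. -/
noncomputable def atlChain (Ag : Type) [Nonempty Ag] (k : ℕ) (hk : 1 ≤ k) : CGM Ag (Fin (2 * k + 2)) where
  Act := Bool
  act _ _ := Set.univ
  act_nonempty _ _ := ⟨true, trivial⟩
  tr s α := chainSucc k hk s (α (Classical.arbitrary Ag))
  val n s := n = 0 ∧ chainVal k s

/-- χ'₀ = ⟨⟨∅⟩⟩□p, χ'_{k+1} = p ∧ ⟨⟨AG⟩⟩X(¬p ∧ ⟨⟨AG⟩⟩X χ'_k); p is var 0. -/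
def chiA (Ag : Type) : ℕ → ATL Ag
  | 0 => .cbox ∅ (.var 0)
  | k + 1 => ATL.conj (.var 0)
      (.cnext Set.univ (ATL.conj (ATL.neg (.var 0)) (.cnext Set.univ (chiA Ag k))))

/-- A'_m = χ'_m ∧ ⟨⟨AG⟩⟩X ⟨⟨∅⟩⟩□¬p. -/
def AformA (Ag : Type) (m : ℕ) : ATL Ag :=
  ATL.conj (chiA Ag m) (.cnext Set.univ (.cbox ∅ (ATL.neg (.var 0))))

/-- B'_m = ⟨⟨AG⟩⟩X A'_m. -/
def BformA (Ag : Type) (m : ℕ) : ATL Ag := .cnext Set.univ (AformA Ag m)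

/-! ### Auxiliary lemmas -/

section Aux

lemma asat_conj {Ag S : Type} (M : CGM Ag S) (φ ψ : ATL Ag) (s : S) :
    asat M (ATL.conj φ ψ) s ↔ asat M φ s ∧ asat M ψ s := by
  simp only [ATL.conj, ATL.neg, asat]; tauto

lemma asat_neg {Ag S : Type} (M : CGM Ag S) (φ : ATL Ag) (s : S) :
    asat M (ATL.neg φ) s ↔ ¬ asat M φ s := by
  simp only [ATL.neg, asat]

variable (Ag : Type) [Nonempty Ag] (k : ℕ) (hk : 1 ≤ k)

/-- The value of `chainSucc` as a function on ℕ. -/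
def nsucc (k s : ℕ) (c : Bool) : ℕ :=
  if s = 0 then (if c then 1 else 2)
  else if 2 ≤ s ∧ s ≤ 2 * k then (if c then s else s + 1)
  else s

lemma chainSucc_val (s : Fin (2 * k + 2)) (c : Bool) :
    (chainSucc k hk s c).val = nsucc k s.val c := by
  unfold chainSucc nsucc
  split_ifs <;> rfl

lemma asat_var_zero (s : Fin (2 * k + 2)) :
    asat (atlChain Ag k hk) (.var 0) s ↔
      (s.val = 0 ∨ (3 ≤ s.val ∧ s.val % 2 = 1)) := by
  show (0 = 0 ∧ chainVal k s) ↔ _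
  simp [chainVal]

lemma asat_cnext_univ (φ : ATL Ag) (s : Fin (2 * k + 2)) :
    asat (atlChain Ag k hk) (.cnext Set.univ φ) s ↔
      ∃ c : Bool, asat (atlChain Ag k hk) φ (chainSucc k hk s c) := by
  constructor
  · rintro ⟨αC, -, h⟩
    exact ⟨αC (Classical.arbitrary Ag),
      h αC (fun a => Set.mem_univ _) (fun c _ => rfl)⟩
  · rintro ⟨c, h⟩
    refine ⟨fun _ => c, fun a _ => Set.mem_univ _, ?_⟩
    intro α hα hag
    have hac : α (Classical.arbitrary Ag) = c := hag _ (Set.mem_univ _)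
    show asat (atlChain Ag k hk) φ (chainSucc k hk s (α (Classical.arbitrary Ag)))
    rw [hac]; exact h

/-- A "good path" in the chain model: each step follows some edge. -/
def goodPath (π : ℕ → Fin (2 * k + 2)) : Prop :=
  ∀ j, ∃ c : Bool, π (j + 1) = chainSucc k hk (π j) c

lemma asat_cbox_empty (φ : ATL Ag) (s : Fin (2 * k + 2)) :
    asat (atlChain Ag k hk) (.cbox ∅ φ) s ↔
      ∀ π : ℕ → Fin (2 * k + 2), π 0 = s → goodPath k hk π →
        ∀ i, asat (atlChain Ag k hk) φ (π i) := by
  constructor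
  · rintro ⟨str, hstr, h⟩ π h0 hg i
    refine h π ⟨h0, fun j => ?_⟩ i
    obtain ⟨c, hc⟩ := hg j
    exact ⟨fun _ => c, fun a => Set.mem_univ _,
      fun a ha => absurd ha (Set.notMem_empty a), hc⟩
  · intro h
    refine ⟨fun _ _ _ => true, fun a hh ss => Set.mem_univ _, ?_⟩
    rintro π ⟨h0, hstep⟩ i
    refine h π h0 (fun j => ?_) i
    obtain ⟨α, -, -, hα⟩ := hstep j
    exact ⟨α (Classical.arbitrary Ag), hα⟩

lemma self_loop (t : Fin (2 * k + 2)) (ht : t.val = 1 ∨ t.val = 2 * k + 1)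
    (c : Bool) : chainSucc k hk t c = t := by
  have h1 : ¬ (t.val = 0) := by omega
  have h2 : ¬ (2 ≤ t.val ∧ t.val ≤ 2 * k) := by omega
  rw [chainSucc, if_neg h1, dif_neg h2]

lemma box_of_fix (t : Fin (2 * k + 2))
    (hfix : ∀ c, chainSucc k hk t c = t) (φ : ATL Ag)
    (hφ : asat (atlChain Ag k hk) φ t) :
    asat (atlChain Ag k hk) (.cbox ∅ φ) t := by
  rw [asat_cbox_empty]
  intro π h0 hg i
  have hi : π i = t := by
    induction i with
    | zero => exact h0
    | succ n ih => obtain ⟨c, hc⟩ := hg n; rw [hc, ih, hfix]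
  rw [hi]; exact hφ

/-- The path that climbs to the right from state `s` and stays at `2k+1`. -/
def climb (s : ℕ) : ℕ → Fin (2 * k + 2) :=
  fun i => ⟨min (s + i) (2 * k + 1), by omega⟩

lemma climb_good (s : ℕ) (hs : 2 ≤ s) (hs' : s ≤ 2 * k + 1) :
    goodPath k hk (climb k s) := by
  intro j
  refine ⟨false, Fin.ext ?_⟩
  rw [chainSucc_val]
  show min (s + (j + 1)) (2 * k + 1) = nsucc k (min (s + j) (2 * k + 1)) false
  simp only [Nat.min_def]
  unfold nsucc
  split_ifs <;> first | omega | simp_all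

/-- The path that moves once from `s` to `t` and stays at `t`. -/
def pathTo (s t : Fin (2 * k + 2)) : ℕ → Fin (2 * k + 2) :=
  fun i => if i = 0 then s else t

lemma pathTo_good (s t : Fin (2 * k + 2)) (c₀ c₁ : Bool)
    (h0 : chainSucc k hk s c₀ = t) (h1 : chainSucc k hk t c₁ = t) :
    goodPath k hk (pathTo k s t) := by
  intro j
  cases j with
  | zero => exact ⟨c₀, by simp [pathTo, h0]⟩
  | succ n => exact ⟨c₁, by simp [pathTo, h1]⟩

lemma chainSucc_eq_of_val (s : Fin (2 * k + 2)) (c : Bool) (t : Fin (2 * k + 2))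
    (h : nsucc k s.val c = t.val) : chainSucc k hk s c = t :=
  Fin.ext (by rw [chainSucc_val, h])

lemma box_negp (x : Fin (2 * k + 2)) :
    asat (atlChain Ag k hk) (.cbox ∅ (ATL.neg (.var 0))) x ↔ x.val = 1 := by
  constructor
  · intro h
    rw [asat_cbox_empty] at h
    by_contra hx
    rcases Nat.lt_or_ge x.val 2 with h2 | h2
    · -- x.val = 0 : p holds at x itself; use the path x → ⟨1⟩ → ⟨1⟩ → ...
      have hx0 : x.val = 0 := by omega
      have hone : (⟨1, by omega⟩ : Fin (2 * k + 2)).val = 1 := rfl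
      have hgp : goodPath k hk (pathTo k x ⟨1, by omega⟩) := by
        refine pathTo_good k hk x _ true true ?_ ?_
        · exact chainSucc_eq_of_val k hk _ _ _
            (show nsucc k x.val true = 1 by
              unfold nsucc; split_ifs <;> first | omega | simp_all)
        · exact self_loop k hk _ (Or.inl rfl) true
      have := h _ rfl hgp 0
      rw [asat_neg, asat_var_zero] at this
      exact this (Or.inl (by show x.val = 0; exact hx0))
    · -- x.val ≥ 2 : climb to 2k+1 which satisfies p
      have hxl := x.isLt
      have hgp := climb_good k hk x.val h2 (by omega)
      have hc0 : climb k x.val 0 = x := Fin.ext (by simp [climb, Nat.min_def]; omega)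
      have := h _ hc0 hgp (2 * k + 1 - x.val)
      rw [asat_neg, asat_var_zero] at this
      refine this ?_
      have : (climb k x.val (2 * k + 1 - x.val)).val = 2 * k + 1 := by
        simp [climb, Nat.min_def]; omega
      omega
  · intro hx
    refine box_of_fix Ag k hk x (fun c => self_loop k hk x (Or.inl hx) c) _ ?_
    rw [asat_neg, asat_var_zero]
    omega

lemma box_p (x : Fin (2 * k + 2)) :
    asat (atlChain Ag k hk) (.cbox ∅ (.var 0)) x ↔ x.val = 2 * k + 1 := by
  constructor
  · intro h
    rw [asat_cbox_empty] at h
    by_contra hx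
    have hlt := x.isLt
    -- first, p must hold at x (take i = 0 on some good path)
    rcases eq_or_ne x.val 0 with hx0 | hx0
    · -- path x → ⟨2⟩ → ⟨2⟩ → ...
      have hgp : goodPath k hk (pathTo k x ⟨2, by omega⟩) := by
        refine pathTo_good k hk x _ false true ?_ ?_
        · exact chainSucc_eq_of_val k hk _ _ _
            (show nsucc k x.val false = 2 by
              unfold nsucc; split_ifs <;> first | omega | simp_all)
        · exact chainSucc_eq_of_val k hk _ _ _
            (show nsucc k 2 true = 2 by
              unfold nsucc; split_ifs <;> first | omega | simp_all)
      have := h _ rfl hgp 1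
      rw [asat_var_zero] at this
      simp [pathTo] at this
    · rcases eq_or_ne x.val 1 with hx1 | hx1
      · -- constant path at x = b
        have hgp : goodPath k hk (pathTo k x x) :=
          pathTo_good k hk x x true true (self_loop k hk x (Or.inl hx1) true)
            (self_loop k hk x (Or.inl hx1) true)
        have := h _ rfl hgp 0
        rw [asat_var_zero] at this
        change x.val = 0 ∨ (3 ≤ x.val ∧ x.val % 2 = 1) at this
        omega
      · -- 2 ≤ x ≤ 2k : climb; p at i = 0 and i = 1 give a contradiction
        have h2 : 2 ≤ x.val := by omega
        have hgp := climb_good k hk x.val h2 (by omega)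
        have hc0 : climb k x.val 0 = x := Fin.ext (by simp [climb, Nat.min_def]; omega)
        have h0 := h _ hc0 hgp 0
        have h1 := h _ hc0 hgp 1
        rw [asat_var_zero] at h0 h1
        have e0 : (climb k x.val 0).val = x.val := by rw [hc0]
        have e1 : (climb k x.val 1).val = x.val + 1 := by
          simp [climb, Nat.min_def]; omega
        omega
  · intro hx
    refine box_of_fix Ag k hk x (fun c => self_loop k hk x (Or.inr hx) c) _ ?_
    rw [asat_var_zero]
    omega

lemma nsucc_true (k s : ℕ) : nsucc k s true = if s = 0 then 1 else s := by
  unfold nsucc; split_ifs <;> first | rfl | simp_all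

lemma nsucc_false (k s : ℕ) :
    nsucc k s false = if s = 0 then 2 else if 2 ≤ s ∧ s ≤ 2 * k then s + 1 else s := by
  unfold nsucc; split_ifs <;> first | rfl | simp_all

/-- Arithmetic characterization of the states satisfying χ'_j. -/
def chiP (k j s : ℕ) : Prop :=
  (j = 0 ∧ s = 2 * k + 1) ∨ (1 ≤ j ∧ 3 ≤ s ∧ s + 2 * j = 2 * k + 1) ∨
    (1 ≤ j ∧ j = k ∧ s = 0)

set_option maxHeartbeats 4000000 in
lemma chi_char (j : ℕ) (s : Fin (2 * k + 2)) :
    asat (atlChain Ag k hk) (chiA Ag j) s ↔ chiP k j s.val := by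
  induction j generalizing s with
  | zero =>
    show asat (atlChain Ag k hk) (.cbox ∅ (.var 0)) s ↔ _
    rw [box_p]
    unfold chiP
    omega
  | succ n ih =>
    show asat (atlChain Ag k hk)
      (ATL.conj (.var 0) (.cnext Set.univ
        (ATL.conj (ATL.neg (.var 0)) (.cnext Set.univ (chiA Ag n))))) s ↔ _
    simp only [asat_conj, asat_cnext_univ, asat_neg, asat_var_zero, ih,
      chainSucc_val, Bool.exists_bool, nsucc_true, nsucc_false]
    have hlt := s.isLt
    unfold chiP
    rcases eq_or_ne (s.val : ℕ) 0 with h0 | h0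
    · simp only [h0, if_pos rfl]
      norm_num
      (split_ifs <;>
        first
          | exact (by assumption : False).elim
          | ((try simp only [false_and, and_false, or_false, false_or, true_and,
            and_true, not_false_iff, false_iff, iff_false]); omega))
    · rcases Classical.em (2 ≤ (s.val : ℕ) ∧ (s.val : ℕ) ≤ 2 * k) with h2 | h2
      · simp only [if_neg h0, if_pos h2]
        (split_ifs <;>
          first
            | exact (by assumption : False).elim
            | ((try simp only [false_and, and_false, or_false, false_or, true_and,
                and_true, not_false_iff, false_iff, iff_false]); omega))
      · simp only [if_neg h0, if_neg h2]
        omega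

end Aux

set_option maxHeartbeats 4000000 in
/-- In the concurrent game chain model M'_k, the one-variable ATL formula A'_m is
true at a state x iff k = m and x is the root. -/
theorem atl_chain_model_Aform (Ag : Type) [Fintype Ag] [Nonempty Ag]
    (m k : ℕ) (hm : 1 ≤ m) (hk : 1 ≤ k) (x : Fin (2 * k + 2)) :
    asat (atlChain Ag k hk) (AformA Ag m) x ↔ k = m ∧ x.val = 0 := by
  show asat (atlChain Ag k hk)
    (ATL.conj (chiA Ag m) (.cnext Set.univ (.cbox ∅ (ATL.neg (.var 0))))) x ↔ _
  simp only [asat_conj, asat_cnext_univ, box_negp, chi_char,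
    chainSucc_val, Bool.exists_bool, nsucc_true, nsucc_false]
  have hlt := x.isLt
  unfold chiP
  rcases eq_or_ne (x.val : ℕ) 0 with h0 | h0
  · simp only [h0, if_pos rfl]
    norm_num
    ((try split_ifs) <;>
      first
        | exact (by assumption : False).elim
        | ((try simp only [false_and, and_false, or_false, false_or, true_and,
        and_true, not_false_iff, false_iff, iff_false]); omega))
  · rcases Classical.em (2 ≤ (x.val : ℕ) ∧ (x.val : ℕ) ≤ 2 * k) with h2 | h2
    · simp only [if_neg h0, if_pos h2]
      ((try split_ifs) <;>
        first
          | exact (by assumption : False).elim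
          | ((try simp only [false_and, and_false, or_false, false_or, true_and,
            and_true, not_false_iff, false_iff, iff_false]); omega))
    · simp only [if_neg h0, if_neg h2]
      omega
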